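/- Let k ∈ (−π, −π/2) with k ≠ −3π/4 and set ηⱼ = (2j−1)k. Then for all x ∈ ℝ and all t ∈ [0, 1), as L → ∞ over the positive integers: if α > 1/2 then Σ_{j=1}^{⌊Lt⌋} sin²(x − ηⱼ)/(L − j)^{2α} → 0 and Σ_{j=1}^{⌊Lt⌋} cos²(x − ηⱼ)/(L − j)^{2α} → 0, while if α = 1/2 then Σ_{j=1}^{⌊Lt⌋} sin²(x − ηⱼ)/(L − j) → −(1/2) log(1 − t) and Σ_{j=1}^{⌊Lt⌋} cos²(x − ηⱼ)/(L − j) → −(1/2) log(1 − t); note that −log(1 − t) = ∫₀ᵗ ds/(1 − s). -/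

import Mathlib

open Filter Real

lemma icc_one_sum (f : ℕ → ℝ) (n : ℕ) :
    ∑ j ∈ Finset.Icc 1 n, f j = ∑ i ∈ Finset.range n, f (i + 1) := by
  rw [← Finset.Ico_add_one_right_eq_Icc, Finset.sum_Ico_eq_sum_range]
  simp [add_comm]

lemma cos_sum_bound (a b : ℝ) (hb : Real.sin b ≠ 0) (n : ℕ) :
    |∑ j ∈ Finset.Icc 1 n, Real.cos (a + 2 * b * j)| ≤ 1 / |Real.sin b| := by
  set f : ℕ → ℝ := fun i => Real.sin (a + (2 * i + 1) * b) with hf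
  have key : ∀ i : ℕ, f (i + 1) - f i = 2 * Real.sin b * Real.cos (a + 2 * b * (i + 1)) := by
    intro i
    rw [hf]
    simp only
    rw [Real.sin_sub_sin]
    push_cast
    ring_nf
  have htel : ∑ j ∈ Finset.Icc 1 n, (2 * Real.sin b * Real.cos (a + 2 * b * j)) = f n - f 0 := by
    rw [icc_one_sum]
    rw [← Finset.sum_range_sub f n]
    apply Finset.sum_congr rfl
    intro i _
    rw [key i]
    push_cast
    ring_nf
  have h2 : 2 * Real.sin b * ∑ j ∈ Finset.Icc 1 n, Real.cos (a + 2 * b * j) = f n - f 0 := by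
    rw [← htel, Finset.mul_sum]
  have hsb : (0:ℝ) < |Real.sin b| := abs_pos.mpr hb
  rw [le_div_iff₀ hsb]
  have : |∑ j ∈ Finset.Icc 1 n, Real.cos (a + 2 * b * j)| * |Real.sin b| * 2
      = |2 * Real.sin b * ∑ j ∈ Finset.Icc 1 n, Real.cos (a + 2 * b * j)| := by
    rw [abs_mul, abs_mul]
    simp [abs_of_nonneg]
    ring
  have hb2 : |f n - f 0| ≤ 2 := by
    have h1 : |f n| ≤ 1 := Real.abs_sin_le_one _
    have h0 : |f 0| ≤ 1 := Real.abs_sin_le_one _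
    calc |f n - f 0| ≤ |f n| + |f 0| := abs_sub _ _
      _ ≤ 2 := by linarith
  rw [h2] at this
  linarith [this ▸ hb2]

lemma chain_le (w : ℕ → ℝ) : ∀ n : ℕ, 1 ≤ n →
    (∀ i : ℕ, 1 ≤ i → i + 1 ≤ n → w i ≤ w (i + 1)) → w 1 ≤ w n := by
  intro n
  induction n with
  | zero => omega
  | succ m ih =>
    intro hn hmono
    rcases Nat.eq_or_lt_of_le hn with h | h
    · simp [← h]
    · have hm : 1 ≤ m := by omega
      exact le_trans (ih hm (fun i h1 h2 => hmono i h1 (by omega))) (hmono m hm le_rfl)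

lemma abel_bound (c w : ℕ → ℝ) (C : ℝ) (n : ℕ) (hn : 1 ≤ n)
    (hS : ∀ m : ℕ, |∑ j ∈ Finset.Icc 1 m, c j| ≤ C)
    (hw1 : 0 ≤ w 1) (hmono : ∀ i : ℕ, 1 ≤ i → i + 1 ≤ n → w i ≤ w (i + 1)) :
    |∑ j ∈ Finset.Icc 1 n, c j * w j| ≤ 2 * C * w n := by
  have hC : 0 ≤ C := le_trans (abs_nonneg _) (hS 0)
  have hby := Finset.sum_range_by_parts (fun i => w (i + 1)) (fun i => c (i + 1)) n
  simp only [smul_eq_mul] at hby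
  have hsum : ∑ j ∈ Finset.Icc 1 n, c j * w j = ∑ i ∈ Finset.range n, w (i + 1) * c (i + 1) := by
    rw [icc_one_sum]; apply Finset.sum_congr rfl; intro i _; ring
  rw [hsum, hby]
  have hSm : ∀ m : ℕ, |∑ i ∈ Finset.range m, c (i + 1)| ≤ C := by
    intro m; rw [← icc_one_sum]; exact hS m
  -- w (n-1+1) = w n
  have hnn : n - 1 + 1 = n := Nat.succ_pred_eq_of_pos hn
  have hwmono' : ∀ i ∈ Finset.range (n - 1), 0 ≤ w (i + 1 + 1) - w (i + 1) := by
    intro i hi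
    rw [Finset.mem_range] at hi
    have : i + 1 + 1 ≤ n := by omega
    have := hmono (i + 1) (by omega) this
    linarith
  have hwn_nonneg : 0 ≤ w n := le_trans hw1 (chain_le w n hn hmono)
  calc |w (n - 1 + 1) * ∑ i ∈ Finset.range n, c (i + 1) -
          ∑ i ∈ Finset.range (n - 1), (w (i + 1 + 1) - w (i + 1)) * ∑ j ∈ Finset.range (i + 1), c (j + 1)|
      ≤ |w (n - 1 + 1) * ∑ i ∈ Finset.range n, c (i + 1)| +
          |∑ i ∈ Finset.range (n - 1), (w (i + 1 + 1) - w (i + 1)) * ∑ j ∈ Finset.range (i + 1), c (j + 1)| :=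
        abs_sub _ _
    _ ≤ C * w n + C * w n := by
        gcongr
        · rw [hnn, abs_mul, abs_of_nonneg hwn_nonneg, mul_comm]
          exact mul_le_mul_of_nonneg_right (hSm n) hwn_nonneg
        · calc |∑ i ∈ Finset.range (n - 1), (w (i + 1 + 1) - w (i + 1)) * ∑ j ∈ Finset.range (i + 1), c (j + 1)|
              ≤ ∑ i ∈ Finset.range (n - 1), |(w (i + 1 + 1) - w (i + 1)) * ∑ j ∈ Finset.range (i + 1), c (j + 1)| :=
                Finset.abs_sum_le_sum_abs _ _
            _ ≤ ∑ i ∈ Finset.range (n - 1), (w (i + 1 + 1) - w (i + 1)) * C := by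
                apply Finset.sum_le_sum
                intro i hi
                rw [abs_mul, abs_of_nonneg (hwmono' i hi)]
                exact mul_le_mul_of_nonneg_left (hSm (i + 1)) (hwmono' i hi)
            _ = (w (n - 1 + 1) - w 1) * C := by
                rw [← Finset.sum_mul, Finset.sum_range_sub (fun i => w (i + 1))]
            _ ≤ C * w n := by rw [hnn]; nlinarith
    _ = 2 * C * w n := by ring

-- log(u+1) - log u ≤ 1/u for u > 0
lemma log_succ_le (u : ℝ) (hu : 0 < u) : Real.log (u + 1) - Real.log u ≤ 1 / u := by
  rw [← Real.log_div (by linarith) (ne_of_gt hu)]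
  have := Real.log_le_sub_one_of_pos (x := (u + 1) / u) (by positivity)
  have h : (u + 1) / u - 1 = 1 / u := by field_simp; ring
  linarith
-- 1/(v+1) ≤ log(v+1) - log v for v > 0
lemma le_log_succ (v : ℝ) (hv : 0 < v) : 1 / (v + 1) ≤ Real.log (v + 1) - Real.log v := by
  rw [← Real.log_div (by linarith) (ne_of_gt hv)]
  have := Real.log_le_sub_one_of_pos (x := v / (v + 1)) (by positivity)
  have h2 : Real.log (v / (v + 1)) = - Real.log ((v + 1) / v) := by
    rw [← Real.log_inv]
    congr 1
    field_simp
  have h3 : v / (v + 1) - 1 = -(1 / (v + 1)) := by field_simp; ring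
  rw [h2, h3] at this
  linarith

lemma floor_ratio (t : ℝ) (ht0 : 0 ≤ t) :
    Tendsto (fun L : ℕ => (⌊(L : ℝ) * t⌋₊ : ℝ) / L) atTop (nhds t) := by
  have := (tendsto_nat_floor_mul_div_atTop ht0).comp (tendsto_natCast_atTop_atTop (R := ℝ))
  apply this.congr
  intro L
  show (⌊t * ((L:ℕ):ℝ)⌋₊ : ℝ) / ((L:ℕ):ℝ) = _
  rw [mul_comm]

lemma harmonic_lim (t : ℝ) (ht0 : 0 ≤ t) (ht1 : t < 1) :
    Tendsto (fun L : ℕ => ∑ j ∈ Finset.Icc 1 ⌊(L : ℝ) * t⌋₊, 1 / ((L : ℝ) - (j : ℝ)))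
      atTop (nhds (-Real.log (1 - t))) := by
  have hrat := floor_ratio t ht0
  have h1t : (0:ℝ) < 1 - t := by linarith
  -- the eventual set : L(1-t) > 2
  have hev : ∀ᶠ L : ℕ in atTop, 2 < (L : ℝ) * (1 - t) := by
    have : Tendsto (fun L : ℕ => (L : ℝ) * (1 - t)) atTop atTop :=
      (tendsto_natCast_atTop_atTop (R := ℝ)).atTop_mul_const h1t
    exact this.eventually_gt_atTop 2
  -- lower bound function
  set g : ℕ → ℝ := fun L => Real.log L - Real.log ((L : ℝ) - (⌊(L : ℝ) * t⌋₊ : ℝ)) with hg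
  set h : ℕ → ℝ := fun L =>
    Real.log ((L : ℝ) - 1) - Real.log ((L : ℝ) - (⌊(L : ℝ) * t⌋₊ : ℝ) - 1) with hh
  have hfloor_le : ∀ L : ℕ, (⌊(L : ℝ) * t⌋₊ : ℝ) ≤ (L : ℝ) * t :=
    fun L => Nat.floor_le (by positivity)
  -- limits of g and h
  have hgl : Tendsto g atTop (nhds (-Real.log (1 - t))) := by
    have hq : Tendsto (fun L : ℕ => 1 - (⌊(L : ℝ) * t⌋₊ : ℝ) / L) atTop (nhds (1 - t)) :=
      tendsto_const_nhds.sub hrat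
    have := (hq.log (ne_of_gt h1t)).neg
    apply this.congr'
    filter_upwards [hev] with L hL
    have hL0 : (0:ℝ) < L := by nlinarith [hfloor_le L]
    have hLn : (0:ℝ) < (L : ℝ) - (⌊(L : ℝ) * t⌋₊ : ℝ) := by nlinarith [hfloor_le L]
    rw [hg]
    simp only
    rw [show (1:ℝ) - (⌊(L : ℝ) * t⌋₊ : ℝ) / L = ((L : ℝ) - (⌊(L : ℝ) * t⌋₊ : ℝ)) / L from by
      field_simp, Real.log_div (ne_of_gt hLn) (ne_of_gt hL0)]
    ring
  have hhl : Tendsto h atTop (nhds (-Real.log (1 - t))) := by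
    have hinv : Tendsto (fun L : ℕ => (L : ℝ)⁻¹) atTop (nhds 0) :=
      tendsto_inv_atTop_zero.comp (tendsto_natCast_atTop_atTop (R := ℝ))
    have hq : Tendsto (fun L : ℕ =>
        (1 - (⌊(L : ℝ) * t⌋₊ : ℝ) / L - (L : ℝ)⁻¹) / (1 - (L : ℝ)⁻¹)) atTop
        (nhds (1 - t)) := by
      have : Tendsto (fun L : ℕ => 1 - (⌊(L : ℝ) * t⌋₊ : ℝ) / L - (L : ℝ)⁻¹) atTop
          (nhds (1 - t - 0)) := (tendsto_const_nhds.sub hrat).sub hinv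
      have h2 : Tendsto (fun L : ℕ => 1 - (L : ℝ)⁻¹) atTop (nhds (1 - 0)) :=
        tendsto_const_nhds.sub hinv
      have h3 := this.div h2 (by norm_num)
      rw [sub_zero, sub_zero, div_one] at h3
      exact h3
    have := (hq.log (ne_of_gt h1t)).neg
    apply this.congr'
    filter_upwards [hev] with L hL
    have hL0 : (0:ℝ) < L := by nlinarith [hfloor_le L]
    have hL1 : (1:ℝ) < (L : ℝ) - 1 := by nlinarith [hfloor_le L, ht0, mul_nonneg (le_of_lt hL0) ht0]
    have hLn : (1:ℝ) < (L : ℝ) - (⌊(L : ℝ) * t⌋₊ : ℝ) - 1 := by nlinarith [hfloor_le L]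
    rw [hh]
    simp only
    rw [show (1 - (⌊(L : ℝ) * t⌋₊ : ℝ) / L - (L : ℝ)⁻¹) / (1 - (L : ℝ)⁻¹)
        = ((L : ℝ) - (⌊(L : ℝ) * t⌋₊ : ℝ) - 1) / ((L : ℝ) - 1) from by
      rw [div_eq_div_iff (by
        have h9 : ((L:ℝ))⁻¹ < 1 := by
          rw [inv_lt_one_iff₀]; right; linarith
        linarith) (by linarith)]
      field_simp
      try ring, Real.log_div (by linarith) (by linarith)]
    ring
  -- squeeze
  apply tendsto_of_tendsto_of_tendsto_of_le_of_le' hgl hhl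
  · -- g L ≤ sum
    filter_upwards [hev] with L hL
    set n := ⌊(L : ℝ) * t⌋₊ with hn
    have hjL : ∀ i : ℕ, i < n → (1:ℝ) < (L : ℝ) - (i + 1) := by
      intro i hi
      have h1 : ((i:ℝ) + 1) ≤ (n : ℝ) := by exact_mod_cast hi
      nlinarith [hfloor_le L]
    have htel : g L = ∑ i ∈ Finset.range n,
        ((fun i : ℕ => -Real.log ((L : ℝ) - i)) (i + 1) - (fun i : ℕ => -Real.log ((L : ℝ) - i)) i) := by
      rw [Finset.sum_range_sub (fun i : ℕ => -Real.log ((L : ℝ) - i))]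
      simp [hg]
      ring_nf
      rfl
    rw [htel, icc_one_sum]
    apply Finset.sum_le_sum
    intro i hi
    rw [Finset.mem_range] at hi
    have hu : (0:ℝ) < (L : ℝ) - (i + 1) := by linarith [hjL i hi]
    have := log_succ_le ((L : ℝ) - (i + 1)) hu
    simp only
    push_cast
    have he : (L : ℝ) - (i + 1) + 1 = (L : ℝ) - i := by ring
    rw [he] at this
    push_cast at this ⊢
    linarith
  · -- sum ≤ h L
    filter_upwards [hev] with L hL
    set n := ⌊(L : ℝ) * t⌋₊ with hn
    have hjL : ∀ i : ℕ, i < n → (1:ℝ) < (L : ℝ) - (i + 1) := by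
      intro i hi
      have h1 : ((i:ℝ) + 1) ≤ (n : ℝ) := by exact_mod_cast hi
      nlinarith [hfloor_le L]
    have htel : h L = ∑ i ∈ Finset.range n,
        ((fun i : ℕ => -Real.log ((L : ℝ) - 1 - i)) (i + 1) - (fun i : ℕ => -Real.log ((L : ℝ) - 1 - i)) i) := by
      rw [Finset.sum_range_sub (fun i : ℕ => -Real.log ((L : ℝ) - 1 - i))]
      simp [hh]
      ring_nf
      rfl
    rw [htel, icc_one_sum]
    apply Finset.sum_le_sum
    intro i hi
    rw [Finset.mem_range] at hi
    have hv : (0:ℝ) < (L : ℝ) - 1 - (i + 1) := by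
      have h1 : ((i:ℝ) + 1) ≤ (n : ℝ) := by exact_mod_cast hi
      nlinarith [hfloor_le L]
    have := le_log_succ ((L : ℝ) - 1 - (i + 1)) hv
    simp only
    push_cast
    have he : (L : ℝ) - 1 - (i + 1) + 1 = (L : ℝ) - 1 - i := by ring
    rw [he] at this
    push_cast at this ⊢
    rw [show (L:ℝ) - ((i:ℝ) + 1) = (L:ℝ) - 1 - (i:ℝ) from by ring]
    linarith

lemma rpow_tail_zero (t c α : ℝ) (ht1 : t < 1) (hα : 0 < α) :
    Tendsto (fun L : ℕ => c * ((L : ℝ) * (1 - t)) ^ (-(2 * α))) atTop (nhds 0) := by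
  have h1t : (0:ℝ) < 1 - t := by linarith
  have hL : Tendsto (fun L : ℕ => (L : ℝ) * (1 - t)) atTop atTop :=
    (tendsto_natCast_atTop_atTop (R := ℝ)).atTop_mul_const h1t
  have := (tendsto_rpow_neg_atTop (y := 2 * α) (by linarith)).comp hL
  simpa using this.const_mul c

-- main term tends to zero for α > 1/2
lemma main_zero (t α : ℝ) (ht0 : 0 ≤ t) (ht1 : t < 1) (hα : 1 / 2 < α) :
    Tendsto (fun L : ℕ => ∑ j ∈ Finset.Icc 1 ⌊(L : ℝ) * t⌋₊,
      1 / ((L : ℝ) - (j : ℝ)) ^ (2 * α)) atTop (nhds 0) := by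
  have h1t : (0:ℝ) < 1 - t := by linarith
  have hα0 : (0:ℝ) < 2 * α := by linarith
  -- bound : t * (1-t)^(-(2α)) * L^(1-2α)
  have hbound : Tendsto (fun L : ℕ => ((L:ℝ) * t) * ((L : ℝ) * (1 - t)) ^ (-(2 * α)))
      atTop (nhds 0) := by
    have key : ∀ᶠ L : ℕ in atTop, ((L:ℝ) * t) * ((L : ℝ) * (1 - t)) ^ (-(2 * α))
        = (t * (1 - t) ^ (-(2 * α))) * (L : ℝ) ^ (-(2 * α - 1)) := by
      filter_upwards [eventually_gt_atTop 0] with L hL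
      have hL0 : (0:ℝ) < L := by exact_mod_cast hL
      rw [Real.mul_rpow (le_of_lt hL0) (le_of_lt h1t)]
      rw [show -(2 * α - 1) = 1 + (-(2*α)) from by ring, Real.rpow_add hL0, Real.rpow_one]
      ring
    have := (tendsto_rpow_neg_atTop (y := 2 * α - 1) (by linarith)).comp
      (tendsto_natCast_atTop_atTop (R := ℝ))
    have h2 := this.const_mul (t * (1 - t) ^ (-(2 * α)))
    simp only [Function.comp, mul_zero] at h2
    exact h2.congr' (key.mono fun L hL => hL.symm)
  apply squeeze_zero_norm' _ hbound
  filter_upwards [eventually_gt_atTop 0] with L hL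
  set n := ⌊(L : ℝ) * t⌋₊ with hn
  have hL0 : (0:ℝ) < L := by exact_mod_cast hL
  have hfl : (n : ℝ) ≤ (L:ℝ) * t := Nat.floor_le (by positivity)
  have hterm : ∀ j ∈ Finset.Icc 1 n, 1 / ((L : ℝ) - (j : ℝ)) ^ (2 * α)
      ≤ ((L : ℝ) * (1 - t)) ^ (-(2 * α)) := by
    intro j hj
    rw [Finset.mem_Icc] at hj
    have hjn : (j : ℝ) ≤ (n : ℝ) := by exact_mod_cast hj.2
    have hLj : (L:ℝ) * (1 - t) ≤ (L : ℝ) - (j : ℝ) := by nlinarith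
    have hpos : (0:ℝ) < (L:ℝ) * (1 - t) := by positivity
    rw [Real.rpow_neg (le_of_lt hpos), ← one_div]
    apply one_div_le_one_div_of_le (Real.rpow_pos_of_pos hpos _)
    exact Real.rpow_le_rpow (le_of_lt hpos) hLj (le_of_lt hα0)
  have hterm_nonneg : ∀ j ∈ Finset.Icc 1 n, (0:ℝ) ≤ 1 / ((L : ℝ) - (j : ℝ)) ^ (2 * α) := by
    intro j hj
    rw [Finset.mem_Icc] at hj
    have hjn : (j : ℝ) ≤ (n : ℝ) := by exact_mod_cast hj.2
    have hLj : (0:ℝ) < (L : ℝ) - (j : ℝ) := by nlinarith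
    positivity
  rw [Real.norm_eq_abs, abs_of_nonneg (Finset.sum_nonneg hterm_nonneg)]
  calc ∑ j ∈ Finset.Icc 1 n, 1 / ((L : ℝ) - (j : ℝ)) ^ (2 * α)
      ≤ ∑ _j ∈ Finset.Icc 1 n, ((L : ℝ) * (1 - t)) ^ (-(2 * α)) := Finset.sum_le_sum hterm
    _ = (n : ℝ) * ((L : ℝ) * (1 - t)) ^ (-(2 * α)) := by
        rw [Finset.sum_const, Nat.card_Icc]; simp [nsmul_eq_mul]
    _ ≤ ((L:ℝ) * t) * ((L : ℝ) * (1 - t)) ^ (-(2 * α)) := by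
        apply mul_le_mul_of_nonneg_right hfl
        positivity

lemma osc_zero (a b t α : ℝ) (hb : Real.sin b ≠ 0) (ht0 : 0 ≤ t) (ht1 : t < 1) (hα : 0 < α) :
    Tendsto (fun L : ℕ => ∑ j ∈ Finset.Icc 1 ⌊(L : ℝ) * t⌋₊,
      Real.cos (a + 2 * b * j) / ((L : ℝ) - (j : ℝ)) ^ (2 * α)) atTop (nhds 0) := by
  have h1t : (0:ℝ) < 1 - t := by linarith
  set C := 1 / |Real.sin b| with hC
  have hC0 : 0 ≤ C := by positivity
  apply squeeze_zero_norm' _ (rpow_tail_zero t (2 * C) α ht1 hα)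
  have hev : ∀ᶠ L : ℕ in atTop, 1 ≤ (L : ℝ) * (1 - t) := by
    have : Tendsto (fun L : ℕ => (L : ℝ) * (1 - t)) atTop atTop :=
      (tendsto_natCast_atTop_atTop (R := ℝ)).atTop_mul_const h1t
    exact this.eventually_ge_atTop 1
  filter_upwards [hev, eventually_gt_atTop 0] with L hL hL1
  set n := ⌊(L : ℝ) * t⌋₊ with hn
  have hL0 : (0:ℝ) < L := by exact_mod_cast hL1
  have hfl : (n : ℝ) ≤ (L:ℝ) * t := Nat.floor_le (by positivity)
  have hLn : (L:ℝ) * (1 - t) ≤ (L : ℝ) - (n : ℝ) := by nlinarith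
  have hpos : (0:ℝ) < (L:ℝ) * (1 - t) := by positivity
  have hbnd_nonneg : (0:ℝ) ≤ 2 * C * ((L : ℝ) * (1 - t)) ^ (-(2 * α)) := by positivity
  rcases Nat.eq_zero_or_pos n with h0 | hpos_n
  · rw [Real.norm_eq_abs, h0]
    simpa using hbnd_nonneg
  -- apply abel bound with w j = 1/(L-j)^(2α)
  set w : ℕ → ℝ := fun j => 1 / ((L : ℝ) - (j : ℝ)) ^ (2 * α) with hw
  have hsum_eq : ∑ j ∈ Finset.Icc 1 n, Real.cos (a + 2 * b * j) / ((L : ℝ) - (j : ℝ)) ^ (2 * α)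
      = ∑ j ∈ Finset.Icc 1 n, Real.cos (a + 2 * b * j) * w j := by
    apply Finset.sum_congr rfl
    intro j _
    rw [hw]
    ring
  have hmono : ∀ i : ℕ, 1 ≤ i → i + 1 ≤ n → w i ≤ w (i + 1) := by
    intro i h1 h2
    have hi1 : ((i:ℝ) + 1) ≤ (n : ℝ) := by exact_mod_cast h2
    have ha1 : (0:ℝ) < (L : ℝ) - ((i:ℝ) + 1) := by nlinarith
    have ha2 : (L : ℝ) - ((i:ℝ) + 1) ≤ (L : ℝ) - (i:ℝ) := by linarith
    rw [hw]
    simp only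
    push_cast
    apply one_div_le_one_div_of_le (Real.rpow_pos_of_pos ha1 _)
    exact Real.rpow_le_rpow (le_of_lt ha1) ha2 (by linarith)
  have hw1 : 0 ≤ w 1 := by
    rw [hw]
    have h1n : (1:ℝ) ≤ (n : ℝ) := by exact_mod_cast hpos_n
    have h : (0:ℝ) < (L : ℝ) - 1 := by nlinarith
    simp only
    push_cast
    exact le_of_lt (div_pos one_pos (Real.rpow_pos_of_pos h _))
  have habel := abel_bound (fun j => Real.cos (a + 2 * b * j)) w C n hpos_n
    (fun m => cos_sum_bound a b hb m) hw1 hmono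
  rw [Real.norm_eq_abs, hsum_eq]
  refine le_trans habel ?_
  have hwn : w n ≤ ((L : ℝ) * (1 - t)) ^ (-(2 * α)) := by
    rw [hw]
    simp only
    rw [Real.rpow_neg (le_of_lt hpos), ← one_div]
    apply one_div_le_one_div_of_le (Real.rpow_pos_of_pos hpos _)
    exact Real.rpow_le_rpow (le_of_lt hpos) hLn (by linarith)
  calc 2 * C * w n ≤ 2 * C * ((L : ℝ) * (1 - t)) ^ (-(2 * α)) := by
        apply mul_le_mul_of_nonneg_left hwn (by linarith)
    _ = 2 * C * ((L : ℝ) * (1 - t)) ^ (-(2 * α)) := rfl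


theorem trig_sums_decaying_second_order (k : ℝ) (hk1 : -π < k) (hk2 : k < -(π / 2))
    (hk3 : k ≠ -(3 * π / 4)) (x t : ℝ) (ht0 : 0 ≤ t) (ht1 : t < 1) :
    (∀ α : ℝ, 1 / 2 < α →
      Tendsto (fun L : ℕ => ∑ j ∈ Finset.Icc 1 ⌊(L : ℝ) * t⌋₊,
          Real.sin (x - (2 * (j : ℝ) - 1) * k) ^ 2 / ((L : ℝ) - (j : ℝ)) ^ (2 * α))
        atTop (nhds 0) ∧
      Tendsto (fun L : ℕ => ∑ j ∈ Finset.Icc 1 ⌊(L : ℝ) * t⌋₊,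
          Real.cos (x - (2 * (j : ℝ) - 1) * k) ^ 2 / ((L : ℝ) - (j : ℝ)) ^ (2 * α))
        atTop (nhds 0)) ∧
    (Tendsto (fun L : ℕ => ∑ j ∈ Finset.Icc 1 ⌊(L : ℝ) * t⌋₊,
        Real.sin (x - (2 * (j : ℝ) - 1) * k) ^ 2 / ((L : ℝ) - (j : ℝ)))
      atTop (nhds (-(1 / 2) * Real.log (1 - t))) ∧
    Tendsto (fun L : ℕ => ∑ j ∈ Finset.Icc 1 ⌊(L : ℝ) * t⌋₊,
        Real.cos (x - (2 * (j : ℝ) - 1) * k) ^ 2 / ((L : ℝ) - (j : ℝ)))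
      atTop (nhds (-(1 / 2) * Real.log (1 - t)))) := by
  have hpi := Real.pi_pos
  have hsin2k : 0 < Real.sin (2 * k) := by
    have := Real.sin_pos_of_pos_of_lt_pi (x := 2 * k + 2 * π) (by linarith) (by linarith)
    rwa [Real.sin_add_two_pi] at this
  have hb : Real.sin (-(2 * k)) ≠ 0 := by
    rw [Real.sin_neg]
    exact neg_ne_zero.mpr (ne_of_gt hsin2k)
  set a : ℝ := 2 * x + 2 * k with ha
  set b : ℝ := -(2 * k) with hbdef
  -- pointwise identities
  have hsin_id : ∀ j : ℕ, Real.sin (x - (2 * (j : ℝ) - 1) * k) ^ 2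
      = 1 / 2 - Real.cos (a + 2 * b * j) / 2 := by
    intro j
    rw [Real.sin_sq, Real.cos_sq]
    rw [show 2 * (x - (2 * (j:ℝ) - 1) * k) = a + 2 * b * j from by rw [ha, hbdef]; ring]
    ring
  have hcos_id : ∀ j : ℕ, Real.cos (x - (2 * (j : ℝ) - 1) * k) ^ 2
      = 1 / 2 + Real.cos (a + 2 * b * j) / 2 := by
    intro j
    rw [Real.cos_sq]
    rw [show 2 * (x - (2 * (j:ℝ) - 1) * k) = a + 2 * b * j from by rw [ha, hbdef]; ring]
  refine ⟨fun α hα => ?_, ?_, ?_⟩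
  · -- α > 1/2 case
    have hA := main_zero t α ht0 ht1 hα
    have hB := osc_zero a b t α hb ht0 ht1 (by linarith)
    have hlim : Tendsto (fun L : ℕ =>
        (1/2) * (∑ j ∈ Finset.Icc 1 ⌊(L : ℝ) * t⌋₊, 1 / ((L : ℝ) - (j : ℝ)) ^ (2 * α))
        - (1/2) * (∑ j ∈ Finset.Icc 1 ⌊(L : ℝ) * t⌋₊,
            Real.cos (a + 2 * b * j) / ((L : ℝ) - (j : ℝ)) ^ (2 * α)))
        atTop (nhds 0) := by
      have := (hA.const_mul (1/2 : ℝ)).sub (hB.const_mul (1/2 : ℝ))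
      simpa using this
    have hlim' : Tendsto (fun L : ℕ =>
        (1/2) * (∑ j ∈ Finset.Icc 1 ⌊(L : ℝ) * t⌋₊, 1 / ((L : ℝ) - (j : ℝ)) ^ (2 * α))
        + (1/2) * (∑ j ∈ Finset.Icc 1 ⌊(L : ℝ) * t⌋₊,
            Real.cos (a + 2 * b * j) / ((L : ℝ) - (j : ℝ)) ^ (2 * α)))
        atTop (nhds 0) := by
      have := (hA.const_mul (1/2 : ℝ)).add (hB.const_mul (1/2 : ℝ))
      simpa using this
    constructor
    · apply hlim.congr
      intro L
      rw [Finset.mul_sum, Finset.mul_sum, ← Finset.sum_sub_distrib]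
      apply Finset.sum_congr rfl
      intro j _
      rw [hsin_id j]
      ring
    · apply hlim'.congr
      intro L
      rw [Finset.mul_sum, Finset.mul_sum, ← Finset.sum_add_distrib]
      apply Finset.sum_congr rfl
      intro j _
      rw [hcos_id j]
      ring
  all_goals {
    have hA := harmonic_lim t ht0 ht1
    have hB : Tendsto (fun L : ℕ => ∑ j ∈ Finset.Icc 1 ⌊(L : ℝ) * t⌋₊,
        Real.cos (a + 2 * b * j) / ((L : ℝ) - (j : ℝ))) atTop (nhds 0) := by
      have := osc_zero a b t (1/2) hb ht0 ht1 (by norm_num)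
      apply this.congr
      intro L
      apply Finset.sum_congr rfl
      intro j _
      rw [show (2 : ℝ) * (1/2) = 1 from by norm_num, Real.rpow_one]
    first
    | · -- sin case
        have hlim : Tendsto (fun L : ℕ =>
            (1/2) * (∑ j ∈ Finset.Icc 1 ⌊(L : ℝ) * t⌋₊, 1 / ((L : ℝ) - (j : ℝ)))
            - (1/2) * (∑ j ∈ Finset.Icc 1 ⌊(L : ℝ) * t⌋₊,
                Real.cos (a + 2 * b * j) / ((L : ℝ) - (j : ℝ))))
            atTop (nhds (-(1/2) * Real.log (1 - t))) := by
          have := (hA.const_mul (1/2 : ℝ)).sub (hB.const_mul (1/2 : ℝ))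
          rw [show -(1/2 : ℝ) * Real.log (1 - t) = 1/2 * (-Real.log (1 - t)) - 1/2 * 0 from by ring]
          exact this
        apply hlim.congr
        intro L
        rw [Finset.mul_sum, Finset.mul_sum, ← Finset.sum_sub_distrib]
        apply Finset.sum_congr rfl
        intro j _
        rw [hsin_id j]
        ring
    | · -- cos case
        have hlim : Tendsto (fun L : ℕ =>
            (1/2) * (∑ j ∈ Finset.Icc 1 ⌊(L : ℝ) * t⌋₊, 1 / ((L : ℝ) - (j : ℝ)))
            + (1/2) * (∑ j ∈ Finset.Icc 1 ⌊(L : ℝ) * t⌋₊,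
                Real.cos (a + 2 * b * j) / ((L : ℝ) - (j : ℝ))))
            atTop (nhds (-(1/2) * Real.log (1 - t))) := by
          have := (hA.const_mul (1/2 : ℝ)).add (hB.const_mul (1/2 : ℝ))
          rw [show -(1/2 : ℝ) * Real.log (1 - t) = 1/2 * (-Real.log (1 - t)) + 1/2 * 0 from by ring]
          exact this
        apply hlim.congr
        intro L
        rw [Finset.mul_sum, Finset.mul_sum, ← Finset.sum_add_distrib]
        apply Finset.sum_congr rfl
        intro j _
        rw [hcos_id j]
        ring }
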